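/- Let ρ : [0,T] → ℝ be the explicit solution of the Riccati equation ρ' - B·ρ² - 2A·ρ + C = 0, ρ(T) = D, with B ≠ 0, B·D ≥ 0, B·C > 0. Then its time derivative is given by ρ'(t) = (B·D² + 2A·D - C)·(δ⁺-δ⁻)²·e^{-(δ⁺-δ⁻)(T-t)} / (B·D·(1-e^{-(δ⁺-δ⁻)(T-t)}) + δ⁺·e^{-(δ⁺-δ⁻)(T-t)} - δ⁻)². In particular, ρ is strictly increasing on [0,T] if B·D² + 2A·D - C > 0, strictly decreasing if B·D² + 2A·D - C < 0, and constant (equal to D) if B·D² + 2A·D - C = 0. -/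

import Mathlib

open Real Set

theorem stmt_2 (T A B C D : ℝ) (hT : 0 < T) (hB : B ≠ 0) (hBD : 0 ≤ B * D)
    (hBC : 0 < B * C)
    (δp δm : ℝ) (hδp : δp = -A + Real.sqrt (A ^ 2 + B * C))
    (hδm : δm = -A - Real.sqrt (A ^ 2 + B * C))
    (ρ : ℝ → ℝ)
    (hρ : ∀ t, ρ t =
      (C * (1 - Real.exp (-(δp - δm) * (T - t))) +
        D * (δp - δm * Real.exp (-(δp - δm) * (T - t)))) /
      (B * D * (1 - Real.exp (-(δp - δm) * (T - t))) +
        δp * Real.exp (-(δp - δm) * (T - t)) - δm)) :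
    (∀ t ∈ Icc (0 : ℝ) T, HasDerivAt ρ
      ((B * D ^ 2 + 2 * A * D - C) * (δp - δm) ^ 2 * Real.exp (-(δp - δm) * (T - t)) /
        (B * D * (1 - Real.exp (-(δp - δm) * (T - t))) +
          δp * Real.exp (-(δp - δm) * (T - t)) - δm) ^ 2) t) ∧
    (0 < B * D ^ 2 + 2 * A * D - C → StrictMonoOn ρ (Icc 0 T)) ∧
    (B * D ^ 2 + 2 * A * D - C < 0 → StrictAntiOn ρ (Icc 0 T)) ∧
    (B * D ^ 2 + 2 * A * D - C = 0 → ∀ t ∈ Icc (0 : ℝ) T, ρ t = D) := by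
  have hAC : 0 < A ^ 2 + B * C := by positivity
  have hs2 : Real.sqrt (A ^ 2 + B * C) ^ 2 = A ^ 2 + B * C := Real.sq_sqrt hAC.le
  have hsA : |A| < Real.sqrt (A ^ 2 + B * C) := by
    rw [← Real.sqrt_sq_eq_abs]
    exact Real.sqrt_lt_sqrt (sq_nonneg A) (by linarith)
  have hp0 : 0 < δp := by rw [hδp]; have := le_abs_self A; linarith
  have hm0 : δm < 0 := by rw [hδm]; have := neg_abs_le A; linarith
  have hsum : δp + δm = -(2 * A) := by rw [hδp, hδm]; ring
  have hpm : 0 < δp - δm := by linarith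
  have hDenpos : ∀ t ∈ Icc (0 : ℝ) T,
      0 < B * D * (1 - Real.exp (-(δp - δm) * (T - t))) +
        δp * Real.exp (-(δp - δm) * (T - t)) - δm := by
    intro t ht
    have hE0 : 0 < Real.exp (-(δp - δm) * (T - t)) := Real.exp_pos _
    have hE1 : Real.exp (-(δp - δm) * (T - t)) ≤ 1 := by
      apply Real.exp_le_one_iff.mpr
      nlinarith [ht.2]
    nlinarith [mul_nonneg hBD
      (by linarith : (0:ℝ) ≤ 1 - Real.exp (-(δp - δm) * (T - t)))]
  have key : ∀ t ∈ Icc (0 : ℝ) T, HasDerivAt ρ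
      ((B * D ^ 2 + 2 * A * D - C) * (δp - δm) ^ 2 * Real.exp (-(δp - δm) * (T - t)) /
        (B * D * (1 - Real.exp (-(δp - δm) * (T - t))) +
          δp * Real.exp (-(δp - δm) * (T - t)) - δm) ^ 2) t := by
    intro t ht
    have hfun : ρ = fun u =>
        (C * (1 - Real.exp (-(δp - δm) * (T - u))) +
          D * (δp - δm * Real.exp (-(δp - δm) * (T - u)))) /
        (B * D * (1 - Real.exp (-(δp - δm) * (T - u))) +
          δp * Real.exp (-(δp - δm) * (T - u)) - δm) := funext hρ
    rw [hfun]
    have hne : B * D * (1 - Real.exp (-(δp - δm) * (T - t))) +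
        δp * Real.exp (-(δp - δm) * (T - t)) - δm ≠ 0 := (hDenpos t ht).ne'
    have h1 : HasDerivAt (fun u : ℝ => -(δp - δm) * (T - u)) (δp - δm) t := by
      simpa using ((hasDerivAt_id t).const_sub T).const_mul (-(δp - δm))
    have hEt : HasDerivAt (fun u : ℝ => Real.exp (-(δp - δm) * (T - u)))
        ((δp - δm) * Real.exp (-(δp - δm) * (T - t))) t := by
      simpa [mul_comm] using h1.exp
    have hN : HasDerivAt (fun u =>
        C * (1 - Real.exp (-(δp - δm) * (T - u))) +
          D * (δp - δm * Real.exp (-(δp - δm) * (T - u))))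
        (C * (0 - (δp - δm) * Real.exp (-(δp - δm) * (T - t))) +
          D * (-(δm * ((δp - δm) * Real.exp (-(δp - δm) * (T - t)))))) t := by
      exact (((hasDerivAt_const t (1:ℝ)).sub hEt).const_mul C).add
        (((hEt.const_mul δm).const_sub δp).const_mul D)
    have hDen : HasDerivAt (fun u =>
        B * D * (1 - Real.exp (-(δp - δm) * (T - u))) +
          δp * Real.exp (-(δp - δm) * (T - u)) - δm)
        (B * D * (0 - (δp - δm) * Real.exp (-(δp - δm) * (T - t))) +
          δp * ((δp - δm) * Real.exp (-(δp - δm) * (T - t)))) t := by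
      exact ((((hasDerivAt_const t (1:ℝ)).sub hEt).const_mul (B * D)).add
        (hEt.const_mul δp)).sub_const δm
    have hq := hN.div hDen hne
    convert hq using 1
    case e'_4 => rfl
    case e'_5 => rfl
    case e'_8 => rfl
    rw [div_eq_div_iff (pow_ne_zero 2 hne) (pow_ne_zero 2 hne)]
    linear_combination (D * Real.exp (-(δp - δm) * (T - t)) * (δp - δm) ^ 2 *
      (B * D * (1 - Real.exp (-(δp - δm) * (T - t))) +
        δp * Real.exp (-(δp - δm) * (T - t)) - δm) ^ 2) * hsum
  refine ⟨key, ?_, ?_, ?_⟩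
  · intro hpos
    apply strictMonoOn_of_deriv_pos (convex_Icc 0 T)
      (fun t ht => (key t ht).continuousAt.continuousWithinAt)
    intro x hx
    rw [interior_Icc] at hx
    have hx' : x ∈ Icc (0:ℝ) T := Ioo_subset_Icc_self hx
    rw [(key x hx').deriv]
    exact div_pos (by positivity) (pow_pos (hDenpos x hx') 2)
  · intro hneg
    apply strictAntiOn_of_deriv_neg (convex_Icc 0 T)
      (fun t ht => (key t ht).continuousAt.continuousWithinAt)
    intro x hx
    rw [interior_Icc] at hx
    have hx' : x ∈ Icc (0:ℝ) T := Ioo_subset_Icc_self hx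
    rw [(key x hx').deriv]
    apply div_neg_of_neg_of_pos _ (pow_pos (hDenpos x hx') 2)
    have h1 : (0:ℝ) < (δp - δm) ^ 2 * Real.exp (-(δp - δm) * (T - x)) := by positivity
    nlinarith
  · intro h0 t ht
    rw [hρ t, div_eq_iff (hDenpos t ht).ne']
    linear_combination D * (1 - Real.exp (-(δp - δm) * (T - t))) * hsum -
      (1 - Real.exp (-(δp - δm) * (T - t))) * h0
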